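/- Suppose (A+1)/2 > c. Then the socially optimal graph is: complete clique on T_A, each type-B node adjacent to every type-A node, and no type-B to type-B edges. Its social cost equals 2|T_B|(|T_B| − 1 + ((A+1)/2 + c)|T_A|) + |T_A|(|T_A|−1)(c_A + A). -/

import Mathlib

open SimpleGraph Finset

/-- Cost of player `i`: link costs plus weighted distances (weight `A` to type-A nodes). -/
noncomputable def cost {V : Type*} [Fintype V] [DecidableEq V] (A cA cB : ℝ) (tA : V → Bool)
    (G : SimpleGraph V) (i : V) : ℝ :=
  (Set.ncard {j | G.Adj i j} : ℝ) * (if tA i then cA else cB) +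
    ∑ j ∈ Finset.univ.erase i, (if tA j then A else 1) * (G.dist i j : ℝ)

/-- Social cost: sum of all players' costs. -/
noncomputable def socialCost {V : Type*} [Fintype V] [DecidableEq V] (A cA cB : ℝ)
    (tA : V → Bool) (G : SimpleGraph V) : ℝ :=
  ∑ i, cost A cA cB tA G i

/-- Complete graph on type-A nodes, every type-B node adjacent to every type-A node, and
no type-B to type-B edges. -/
def fullBipartiteClique (nA nB : ℕ) : SimpleGraph (Fin nA ⊕ Fin nB) :=
  SimpleGraph.fromRel (fun u v =>
    match u, v with
    | .inl _, .inl _ => True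
    | .inl _, .inr _ => True
    | .inr _, .inl _ => True
    | .inr _, .inr _ => False)

open scoped Classical

lemma fbc_adj {nA nB : ℕ} (u v : Fin nA ⊕ Fin nB) :
    (fullBipartiteClique nA nB).Adj u v ↔ u ≠ v ∧ (u.isLeft ∨ v.isLeft) := by
  cases u <;> cases v <;> simp [fullBipartiteClique]

lemma fbc_conn {nA nB : ℕ} (hA : 1 ≤ nA) : (fullBipartiteClique nA nB).Connected := by
  have a0 : Fin nA := ⟨0, hA⟩
  rw [connected_iff_exists_forall_reachable]
  refine ⟨Sum.inl a0, fun v => ?_⟩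
  cases v with
  | inl a =>
    by_cases h : a = a0
    · subst h; exact Reachable.refl _
    · exact Adj.reachable (by simp [fbc_adj, h, Ne.symm h])
  | inr b => exact Adj.reachable (by simp [fbc_adj])

lemma two_le_dist' {V : Type*} {G : SimpleGraph V} {u v : V} (hc : G.Connected)
    (hne : u ≠ v) (hadj : ¬ G.Adj u v) : 2 ≤ G.dist u v := by
  have h1 : 0 < G.dist u v := hc.pos_dist_of_ne hne
  have h2 : G.dist u v ≠ 1 := fun h => hadj ((SimpleGraph.dist_eq_one_iff_adj (G := G)).mp h)
  omega

lemma fbc_dist_inr {nA nB : ℕ} (hA : 1 ≤ nA) {b b' : Fin nB} (h : b ≠ b') :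
    (fullBipartiteClique nA nB).dist (Sum.inr b) (Sum.inr b') = 2 := by
  have hadj : ¬ (fullBipartiteClique nA nB).Adj (Sum.inr b) (Sum.inr b') := by
    simp [fbc_adj]
  have hle : (fullBipartiteClique nA nB).dist (Sum.inr b) (Sum.inr b') ≤ 2 := by
    have a0 : Fin nA := ⟨0, hA⟩
    have h1 : (fullBipartiteClique nA nB).Adj (Sum.inr b) (Sum.inl a0) := by simp [fbc_adj]
    have h2 : (fullBipartiteClique nA nB).Adj (Sum.inl a0) (Sum.inr b') := by simp [fbc_adj]
    have := SimpleGraph.dist_le (Walk.cons h1 (Walk.cons h2 Walk.nil))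
    simpa using this
  have hge := two_le_dist' (G := fullBipartiteClique nA nB) (fbc_conn hA) (by simp [h]) hadj
  omega

lemma socialCost_eq {V : Type*} [Fintype V] [DecidableEq V] (A cA cB : ℝ) (tA : V → Bool)
    (G : SimpleGraph V) :
    socialCost A cA cB tA G = ∑ i, ∑ j,
      ((if G.Adj i j then (if tA i then cA else cB) else 0)
        + (if tA j then A else 1) * (G.dist i j : ℝ)) := by
  unfold socialCost cost
  refine Finset.sum_congr rfl fun i _ => ?_
  rw [Finset.sum_add_distrib]
  congr 1
  · have h1 : {j | G.Adj i j}.ncard = (Finset.univ.filter (fun j => G.Adj i j)).card := by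
      rw [Set.ncard_eq_toFinset_card']
      congr 1
      ext j
      simp
    rw [h1]
    have h2 : ((Finset.univ.filter (fun j => G.Adj i j)).card : ℝ)
        * (if tA i then cA else cB)
        = ∑ j ∈ Finset.univ.filter (fun j => G.Adj i j), (if tA i then cA else cB) := by
      rw [Finset.sum_const, nsmul_eq_mul]
    rw [h2, Finset.sum_filter]
  · rw [Finset.sum_erase]
    simp [SimpleGraph.dist_self]

noncomputable def hfun (A cA cB : ℝ) : Bool → Bool → ℝ := fun bi bj =>
  if bi && bj then 2*(cA+A) else if bi || bj then cA+cB+A+1 else 4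

/-- ordered-pair contribution to social cost -/
noncomputable def tt {nA nB : ℕ} (A cA cB : ℝ) (G : SimpleGraph (Fin nA ⊕ Fin nB))
    (i j : Fin nA ⊕ Fin nB) : ℝ :=
  (if G.Adj i j then (if i.isLeft then cA else cB) else 0)
    + (if j.isLeft then A else 1) * (G.dist i j : ℝ)

noncomputable def ee (A cA cB : ℝ) {nA nB : ℕ} (i j : Fin nA ⊕ Fin nB) : ℝ :=
  if i = j then 0 else hfun A cA cB i.isLeft j.isLeft

lemma pair_lb {nA nB : ℕ} {A cA cB : ℝ} (hA1 : 1 < A) (hc : 1 < cA) (hcc : cA ≤ cB)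
    (hcB : cB < A) (hreg : (cA + cB) / 2 < (A + 1) / 2)
    (G : SimpleGraph (Fin nA ⊕ Fin nB)) (hG : G.Connected)
    (i j : Fin nA ⊕ Fin nB) (hij : i ≠ j) :
    hfun A cA cB i.isLeft j.isLeft ≤ tt A cA cB G i j + tt A cA cB G j i := by
  unfold tt
  rw [SimpleGraph.dist_comm (u := j)]
  by_cases hadj : G.Adj i j
  · have hadj' : G.Adj j i := hadj.symm
    have hd : G.dist i j = 1 := (SimpleGraph.dist_eq_one_iff_adj (G := G)).mpr hadj
    rw [hd]
    simp only [hadj, hadj', if_true]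
    rcases i with a | b <;> rcases j with a' | b' <;> simp [hfun] <;> nlinarith
  · have hadj' : ¬ G.Adj j i := fun h => hadj h.symm
    have hd : (2:ℝ) ≤ (G.dist i j : ℝ) := by
      exact_mod_cast two_le_dist' hG hij hadj
    simp only [hadj, hadj', if_false]
    rcases i with a | b <;> rcases j with a' | b' <;> simp [hfun] <;> nlinarith

lemma pair_eq {nA nB : ℕ} (hA : 1 ≤ nA) {A cA cB : ℝ}
    (i j : Fin nA ⊕ Fin nB) (hij : i ≠ j) :
    tt A cA cB (fullBipartiteClique nA nB) i j + tt A cA cB (fullBipartiteClique nA nB) j i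
      = hfun A cA cB i.isLeft j.isLeft := by
  unfold tt
  rcases i with a | b <;> rcases j with a' | b'
  · have hadj : (fullBipartiteClique nA nB).Adj (Sum.inl a) (Sum.inl a') := by
      simp [fbc_adj]; exact fun h => hij (by rw [h])
    have hd : (fullBipartiteClique nA nB).dist (Sum.inl a) (Sum.inl a') = 1 :=
      SimpleGraph.dist_eq_one_iff_adj.mpr hadj
    rw [SimpleGraph.dist_comm (u := Sum.inl a')]
    simp [hadj, hadj.symm, hd, hfun]; ring
  · have hadj : (fullBipartiteClique nA nB).Adj (Sum.inl a) (Sum.inr b') := by simp [fbc_adj]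
    have hd : (fullBipartiteClique nA nB).dist (Sum.inl a) (Sum.inr b') = 1 :=
      SimpleGraph.dist_eq_one_iff_adj.mpr hadj
    rw [SimpleGraph.dist_comm (u := Sum.inr b')]
    simp [hadj, hadj.symm, hd, hfun]; ring
  · have hadj : (fullBipartiteClique nA nB).Adj (Sum.inr b) (Sum.inl a') := by simp [fbc_adj]
    have hd : (fullBipartiteClique nA nB).dist (Sum.inr b) (Sum.inl a') = 1 :=
      SimpleGraph.dist_eq_one_iff_adj.mpr hadj
    rw [SimpleGraph.dist_comm (u := Sum.inl a')]
    simp [hadj, hadj.symm, hd, hfun]; ring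
  · have hbb : b ≠ b' := fun h => hij (by rw [h])
    have hadj : ¬ (fullBipartiteClique nA nB).Adj (Sum.inr b) (Sum.inr b') := by simp [fbc_adj]
    have hadj' : ¬ (fullBipartiteClique nA nB).Adj (Sum.inr b') (Sum.inr b) := by simp [fbc_adj]
    have hd : (fullBipartiteClique nA nB).dist (Sum.inr b) (Sum.inr b') = 2 :=
      fbc_dist_inr hA hbb
    rw [SimpleGraph.dist_comm (u := Sum.inr b')]
    simp [hadj, hadj', hd, hfun]
    ring

lemma sum_ite_ne {α : Type*} [Fintype α] [DecidableEq α] (a : α) (C : ℝ) :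
    ∑ x, (if a = x then (0:ℝ) else C) = ((Fintype.card α : ℝ) - 1) * C := by
  have h : ∀ x : α, (if a = x then (0:ℝ) else C) = C - (if a = x then C else 0) := by
    intro x; split <;> ring
  simp_rw [h]
  rw [Finset.sum_sub_distrib, Finset.sum_const, Finset.sum_ite_eq]
  simp [Finset.card_univ]
  ring

lemma sum_ee_inl {nA nB : ℕ} (A cA cB : ℝ) (a : Fin nA) :
    ∑ j : Fin nA ⊕ Fin nB, ee A cA cB (Sum.inl a) j
      = ((nA:ℝ)-1) * (2*(cA+A)) + (nB:ℝ) * (cA+cB+A+1) := by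
  rw [Fintype.sum_sum_type]
  have h1 : ∑ a' : Fin nA, ee A cA cB (nA := nA) (nB := nB) (Sum.inl a) (Sum.inl a')
      = ∑ a' : Fin nA, (if a = a' then (0:ℝ) else 2*(cA+A)) := by
    refine Finset.sum_congr rfl fun a' _ => ?_
    simp [ee, hfun]
  have h2 : ∑ b' : Fin nB, ee A cA cB (nA := nA) (nB := nB) (Sum.inl a) (Sum.inr b')
      = ∑ _b' : Fin nB, (cA+cB+A+1) := by
    refine Finset.sum_congr rfl fun b' _ => ?_
    simp [ee, hfun]
  rw [h1, h2, sum_ite_ne, Finset.sum_const]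
  simp [Finset.card_univ, nsmul_eq_mul]; ring

lemma sum_ee_inr {nA nB : ℕ} (A cA cB : ℝ) (b : Fin nB) :
    ∑ j : Fin nA ⊕ Fin nB, ee A cA cB (Sum.inr b) j
      = (nA:ℝ) * (cA+cB+A+1) + ((nB:ℝ)-1) * 4 := by
  rw [Fintype.sum_sum_type]
  have h1 : ∑ a' : Fin nA, ee A cA cB (nA := nA) (nB := nB) (Sum.inr b) (Sum.inl a')
      = ∑ _a' : Fin nA, (cA+cB+A+1) := by
    refine Finset.sum_congr rfl fun a' _ => ?_
    simp [ee, hfun]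
  have h2 : ∑ b' : Fin nB, ee A cA cB (nA := nA) (nB := nB) (Sum.inr b) (Sum.inr b')
      = ∑ b' : Fin nB, (if b = b' then (0:ℝ) else 4) := by
    refine Finset.sum_congr rfl fun b' _ => ?_
    simp [ee, hfun]
  rw [h1, h2, sum_ite_ne, Finset.sum_const]
  simp [Finset.card_univ, nsmul_eq_mul]; ring

lemma sum_ee {nA nB : ℕ} (A cA cB : ℝ) :
    ∑ i : Fin nA ⊕ Fin nB, ∑ j : Fin nA ⊕ Fin nB, ee A cA cB i j
      = (nA:ℝ) * (((nA:ℝ)-1) * (2*(cA+A)) + (nB:ℝ) * (cA+cB+A+1))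
        + (nB:ℝ) * ((nA:ℝ) * (cA+cB+A+1) + ((nB:ℝ)-1) * 4) := by
  rw [Fintype.sum_sum_type]
  simp_rw [sum_ee_inl, sum_ee_inr, Finset.sum_const]
  simp [Finset.card_univ, nsmul_eq_mul]; ring

/-- If `(A+1)/2 > c`, the socially optimal graph is the clique on `T_A` together with all
type-B nodes adjacent to every type-A node and no type-B/type-B edges; its social cost is
`2|T_B|(|T_B| - 1 + ((A+1)/2 + c)|T_A|) + |T_A|(|T_A|-1)(c_A + A)`. -/
theorem fullBipartiteClique_optimal (nA nB : ℕ) (hA : 1 ≤ nA) (hB : 1 ≤ nB)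
    (A cA cB : ℝ) (hA1 : 1 < A) (hc : 1 < cA) (hcc : cA ≤ cB) (hcB : cB < A)
    (hreg : (cA + cB) / 2 < (A + 1) / 2) :
    (∀ G : SimpleGraph (Fin nA ⊕ Fin nB), G.Connected →
      socialCost A cA cB (fun v => v.isLeft) (fullBipartiteClique nA nB) ≤
        socialCost A cA cB (fun v => v.isLeft) G) ∧
    socialCost A cA cB (fun v => v.isLeft) (fullBipartiteClique nA nB) =
      2 * (nB : ℝ) * ((nB : ℝ) - 1 + ((A + 1) / 2 + (cA + cB) / 2) * (nA : ℝ)) +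
        (nA : ℝ) * ((nA : ℝ) - 1) * (cA + A) := by
  have hsc : ∀ G : SimpleGraph (Fin nA ⊕ Fin nB),
      socialCost A cA cB (fun v => v.isLeft) G = ∑ i, ∑ j, tt A cA cB G i j := by
    intro G
    rw [socialCost_eq]
    rfl
  have htt0 : ∀ (G : SimpleGraph (Fin nA ⊕ Fin nB)) (i : Fin nA ⊕ Fin nB),
      tt A cA cB G i i = 0 := by
    intro G i; simp [tt, SimpleGraph.dist_self]
  have hdouble : ∀ G : SimpleGraph (Fin nA ⊕ Fin nB),
      2 * socialCost A cA cB (fun v => v.isLeft) G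
        = ∑ i, ∑ j, (tt A cA cB G i j + tt A cA cB G j i) := by
    intro G
    rw [hsc]
    have hcomm : ∑ i, ∑ j, tt A cA cB G i j = ∑ i, ∑ j, tt A cA cB G j i :=
      Finset.sum_comm
    simp_rw [Finset.sum_add_distrib]
    rw [← hcomm]
    ring
  have hHeq : 2 * socialCost A cA cB (fun v => v.isLeft) (fullBipartiteClique nA nB)
      = ∑ i : Fin nA ⊕ Fin nB, ∑ j : Fin nA ⊕ Fin nB, ee A cA cB i j := by
    rw [hdouble]
    refine Finset.sum_congr rfl fun i _ => Finset.sum_congr rfl fun j _ => ?_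
    by_cases hij : i = j
    · subst hij; simp [ee, htt0]
    · rw [pair_eq hA i j hij]; simp [ee, hij]
  constructor
  · intro G hG
    have hGlb : ∑ i : Fin nA ⊕ Fin nB, ∑ j : Fin nA ⊕ Fin nB, ee A cA cB i j
        ≤ 2 * socialCost A cA cB (fun v => v.isLeft) G := by
      rw [hdouble]
      refine Finset.sum_le_sum fun i _ => Finset.sum_le_sum fun j _ => ?_
      by_cases hij : i = j
      · subst hij; simp [ee, htt0]
      · calc ee A cA cB i j = hfun A cA cB i.isLeft j.isLeft := by simp [ee, hij]
          _ ≤ _ := pair_lb hA1 hc hcc hcB hreg G hG i j hij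
    linarith [hHeq]
  · have hS := sum_ee (nA := nA) (nB := nB) A cA cB
    rw [hS] at hHeq
    have h2 : (nA:ℝ) * (((nA:ℝ)-1) * (2*(cA+A)) + (nB:ℝ) * (cA+cB+A+1))
        + (nB:ℝ) * ((nA:ℝ) * (cA+cB+A+1) + ((nB:ℝ)-1) * 4)
        = 2 * (2 * (nB : ℝ) * ((nB : ℝ) - 1 + ((A + 1) / 2 + (cA + cB) / 2) * (nA : ℝ)) +
        (nA : ℝ) * ((nA : ℝ) - 1) * (cA + A)) := by ring
    linarith [hHeq]
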